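/- Let f : S² → ℝ² be the continuous map f(x) = (dist(x, A), dist(x, B)) where A, B are nonempty subsets of the 2-sphere S²(r) ⊂ ℝ³. Then there exists x* ∈ S²(r) with f(x*) = f(−x*). -/

import Mathlib

open Real Complex Finset Metric

noncomputable def nu (s θ : ℝ) : EuclideanSpace ℝ (Fin 3) :=
  (EuclideanSpace.equiv (Fin 3) ℝ).symm ![(1 - s) * Real.cos θ, (1 - s) * Real.sin θ, s]

lemma nu_apply (s θ : ℝ) (i : Fin 3) :
    nu s θ i = ![(1 - s) * Real.cos θ, (1 - s) * Real.sin θ, s] i := rfl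

lemma nu_norm (s θ : ℝ) : ‖nu s θ‖ = Real.sqrt ((1 - s)^2 + s^2) := by
  rw [EuclideanSpace.norm_eq]
  congr 1
  rw [Fin.sum_univ_three]
  simp only [nu_apply, Real.norm_eq_abs, Matrix.cons_val_zero, Matrix.cons_val_one,
    Matrix.head_cons, Matrix.cons_val_two, Matrix.tail_cons]
  rw [abs_mul, abs_mul, mul_pow, mul_pow]
  simp only [_root_.sq_abs]
  nlinarith [Real.sin_sq_add_cos_sq θ]

lemma nu_norm_pos (s θ : ℝ) : 0 < ‖nu s θ‖ := by
  rw [nu_norm]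
  apply Real.sqrt_pos.2
  nlinarith [sq_nonneg s, sq_nonneg (1-s), sq_nonneg (2*s-1)]

lemma nu_cont : Continuous fun p : ℝ × ℝ => nu p.1 p.2 := by
  apply (EuclideanSpace.equiv (Fin 3) ℝ).symm.continuous.comp
  apply continuous_pi
  intro i
  fin_cases i <;> simp <;> fun_prop

lemma nu_antipodal (θ : ℝ) : nu 0 (θ + π) = - nu 0 θ := by
  unfold nu
  rw [← map_neg]
  congr 1
  funext i
  fin_cases i <;> simp [Real.cos_add_pi, Real.sin_add_pi]

lemma nu_periodic (s θ : ℝ) : nu s (θ + 2 * π) = nu s θ := by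
  unfold nu
  congr 1
  funext i
  fin_cases i <;> simp [Real.cos_add_two_pi, Real.sin_add_two_pi]

lemma nu_one (θ θ' : ℝ) : nu 1 θ = nu 1 θ' := by
  unfold nu
  congr 1
  funext i
  fin_cases i <;> simp

noncomputable def xp (r s θ : ℝ) : EuclideanSpace ℝ (Fin 3) := (r / ‖nu s θ‖) • nu s θ

lemma xp_mem (r : ℝ) (hr : 0 < r) (s θ : ℝ) :
    xp r s θ ∈ Metric.sphere (0 : EuclideanSpace ℝ (Fin 3)) r := by
  simp only [Metric.mem_sphere, dist_zero_right, xp, norm_smul]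
  rw [Real.norm_eq_abs, abs_div, abs_of_pos hr, abs_of_pos (nu_norm_pos s θ)]
  rw [div_mul_cancel₀ _ (nu_norm_pos s θ).ne']

lemma xp_antipodal (r θ : ℝ) : xp r 0 (θ + π) = - xp r 0 θ := by
  unfold xp
  rw [nu_antipodal, norm_neg, smul_neg]

lemma xp_periodic (r s θ : ℝ) : xp r s (θ + 2 * π) = xp r s θ := by
  unfold xp; rw [nu_periodic]

lemma xp_one (r θ θ' : ℝ) : xp r 1 θ = xp r 1 θ' := by
  unfold xp; rw [nu_one θ θ']

lemma xp_cont (r : ℝ) : Continuous fun p : ℝ × ℝ => xp r p.1 p.2 := by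
  unfold xp
  apply Continuous.smul (f := fun p : ℝ × ℝ => r / ‖nu p.1 p.2‖) (g := fun p : ℝ × ℝ => nu p.1 p.2)
  · apply Continuous.div continuous_const (nu_cont.norm)
    intro p; exact (nu_norm_pos p.1 p.2).ne'
  · exact nu_cont

lemma tele (h : ℕ → ℂ) (h0 : ∀ j, h j ≠ 0) (N : ℕ) :
    ∏ j ∈ Finset.range N, h (j+1) / h j = h N / h 0 := by
  induction N with
  | zero => simp [div_self (h0 0)]
  | succ n ih =>
      rw [Finset.prod_range_succ, ih, div_mul_div_comm, mul_comm (h 0) (h n),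
        mul_div_mul_left _ _ (h0 n)]

lemma exp_sum_arg (F : ℕ → ℂ) (h0 : ∀ j, F j ≠ 0) (N : ℕ) :
    Complex.exp (((∑ j ∈ Finset.range N, Complex.arg (F (j+1) / F j) : ℝ)) * Complex.I)
      = (F N / (‖F N‖ : ℂ)) / (F 0 / (‖F 0‖ : ℂ)) := by
  have hane : ∀ j, (‖F j‖ : ℂ) ≠ 0 := fun j => by
    exact_mod_cast (norm_ne_zero_iff.mpr (h0 j))
  have key : ∀ j, Complex.exp ((Complex.arg (F (j+1) / F j) : ℝ) * Complex.I)
      = (F (j+1) / (‖F (j+1)‖ : ℂ)) / (F j / (‖F j‖ : ℂ)) := by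
    intro j
    have hz : F (j+1) / F j ≠ 0 := div_ne_zero (h0 _) (h0 _)
    have habs : (‖F (j+1) / F j‖ : ℂ) ≠ 0 := by
      exact_mod_cast (norm_ne_zero_iff.mpr hz)
    have h1 := Complex.norm_mul_exp_arg_mul_I (F (j+1) / F j)
    have hexp : Complex.exp ((Complex.arg (F (j+1) / F j) : ℝ) * Complex.I)
        = (F (j+1) / F j) / (‖F (j+1) / F j‖ : ℂ) := by
      rw [eq_div_iff habs]
      linear_combination h1
    rw [hexp, norm_div]
    push_cast
    field_simp
  rw [Complex.ofReal_sum, Finset.sum_mul, Complex.exp_sum]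
  rw [← tele (fun j => F j / (‖F j‖ : ℂ)) (fun j => div_ne_zero (h0 j) (hane j)) N]
  exact Finset.prod_congr rfl fun j _ => key j

lemma ratio_re_pos {z w : ℂ} (h : ‖z - w‖ < ‖w‖) :
    0 < (z / w).re := by
  have hw : w ≠ 0 := by
    intro h'
    rw [h'] at h
    rw [sub_zero, norm_zero] at h
    exact absurd h (norm_nonneg z).not_gt
  have hu1 : ‖z / w - 1‖ < 1 := by
    have he : z / w - 1 = (z - w) / w := by field_simp
    rw [he, norm_div, div_lt_one (norm_pos_iff.mpr hw)]
    exact h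
  set u := z / w with hu
  have h2 : (u.re - 1)^2 + u.im^2 < 1 := by
    have hs := Complex.sq_norm (u - 1)
    have h3 : (‖u-1‖)^2 < 1 := by nlinarith [norm_nonneg (u-1)]
    rw [hs] at h3
    simpa [Complex.normSq_apply, Complex.sub_re, Complex.sub_im, sq] using h3
  nlinarith

theorem stmt_13 (r : ℝ) (hr : 0 < r)
    (A B : Set (EuclideanSpace ℝ (Fin 3)))
    (hA : A.Nonempty) (hB : B.Nonempty)
    (hAs : A ⊆ Metric.sphere (0 : EuclideanSpace ℝ (Fin 3)) r)
    (hBs : B ⊆ Metric.sphere (0 : EuclideanSpace ℝ (Fin 3)) r) :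
    ∃ x ∈ Metric.sphere (0 : EuclideanSpace ℝ (Fin 3)) r,
      Metric.infDist x A = Metric.infDist (-x) A ∧
      Metric.infDist x B = Metric.infDist (-x) B := by
  by_contra hcon
  push_neg at hcon
  -- the odd map g
  set g : EuclideanSpace ℝ (Fin 3) → ℂ := fun y =>
    ((Metric.infDist y A - Metric.infDist (-y) A : ℝ) : ℂ)
      + ((Metric.infDist y B - Metric.infDist (-y) B : ℝ) : ℂ) * Complex.I with hgdef
  have hg0 : ∀ y ∈ Metric.sphere (0 : EuclideanSpace ℝ (Fin 3)) r, g y ≠ 0 := by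
    intro y hy h0
    rw [hgdef] at h0
    have hre := congrArg Complex.re h0
    have him := congrArg Complex.im h0
    simp at hre him
    exact hcon y hy (by linarith) (by linarith)
  have hgodd : ∀ y, g (-y) = - g y := by
    intro y
    simp only [hgdef, neg_neg]
    push_cast
    ring
  have hgcont : Continuous g := by
    rw [hgdef]
    apply Continuous.add
    · exact Complex.continuous_ofReal.comp
        ((Metric.continuous_infDist_pt A).sub
          ((Metric.continuous_infDist_pt A).comp continuous_neg))
    · exact (Complex.continuous_ofReal.comp
        ((Metric.continuous_infDist_pt B).sub
          ((Metric.continuous_infDist_pt B).comp continuous_neg))).mul continuous_const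
  set F : ℝ × ℝ → ℂ := fun p => g (xp r p.1 p.2) with hFdef
  have hFcont : Continuous F := hgcont.comp (xp_cont r)
  have hF0 : ∀ p, F p ≠ 0 := fun p => hg0 _ (xp_mem r hr _ _)
  have hFanti : ∀ t : ℝ, F (0, t + π) = - F (0, t) := by
    intro t
    simp only [hFdef]
    rw [xp_antipodal]
    exact hgodd _
  have hFper : ∀ s t : ℝ, F (s, t + 2*π) = F (s, t) := by
    intro s t
    simp only [hFdef]
    rw [xp_periodic]
  -- compactness setup
  set K : Set (ℝ × ℝ) := Set.Icc (0:ℝ) 1 ×ˢ Set.Icc 0 (2*π) with hKdef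
  have hK : IsCompact K := isCompact_Icc.prod isCompact_Icc
  have hKne : K.Nonempty := ⟨(0,0), ⟨⟨le_refl 0, zero_le_one⟩, ⟨le_refl 0, by positivity⟩⟩⟩
  obtain ⟨p₀, hp₀K, hp₀⟩ := hK.exists_isMinOn hKne
    ((continuous_norm.comp hFcont).continuousOn)
  set ε : ℝ := ‖F p₀‖ with hεdef
  have hε : 0 < ε := norm_pos_iff.mpr (hF0 p₀)
  obtain ⟨δ, hδ, hδ'⟩ := Metric.uniformContinuousOn_iff.mp
    (hK.uniformContinuousOn_of_continuous hFcont.continuousOn) ε hε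
  obtain ⟨m, hm⟩ := exists_nat_gt (π / δ)
  have hm0 : 0 < (m:ℝ) := lt_of_le_of_lt (by positivity) hm
  have hmδ : π / m < δ := by
    rw [div_lt_iff₀ hm0]
    calc π < (m:ℝ) * δ := (div_lt_iff₀ hδ).mp hm
    _ = δ * m := mul_comm _ _
  -- grid
  set θf : ℕ → ℝ := fun j => j * (π / m) with hθdef
  have hθmem : ∀ j : ℕ, j ≤ 2*m → θf j ∈ Set.Icc (0:ℝ) (2*π) := by
    intro j hj
    rw [hθdef]
    constructor
    · positivity
    · have hj' : (j:ℝ) ≤ 2*m := by exact_mod_cast hj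
      calc (j:ℝ) * (π/m) ≤ (2*(m:ℝ)) * (π/m) :=
            mul_le_mul_of_nonneg_right hj' (by positivity)
        _ = 2*π := by field_simp
  -- closeness of consecutive grid values
  have hclose : ∀ s ∈ Set.Icc (0:ℝ) 1, ∀ j : ℕ, j + 1 ≤ 2*m →
      ‖F (s, θf (j+1)) - F (s, θf j)‖ < ‖F (s, θf j)‖ := by
    intro s hs j hj
    have h1 : (s, θf (j+1)) ∈ K := ⟨hs, hθmem _ hj⟩
    have h2 : (s, θf j) ∈ K := ⟨hs, hθmem _ (le_trans (Nat.le_succ j) hj)⟩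
    have hd : dist (s, θf (j+1)) (s, θf j) < δ := by
      rw [Prod.dist_eq]
      have e1 : dist s s = 0 := dist_self s
      have e2 : dist (θf (j+1)) (θf j) = π / m := by
        rw [Real.dist_eq, hθdef]
        have : ((j:ℝ)+1) * (π/m) - j * (π/m) = π/m := by ring
        push_cast
        rw [this]
        rw [abs_of_pos (by positivity)]
      rw [e1, e2]
      exact max_lt hδ hmδ
    have hlt := hδ' _ h1 _ h2 hd
    rw [Complex.dist_eq] at hlt
    calc ‖F (s, θf (j+1)) - F (s, θf j)‖ < ε := hlt
      _ ≤ ‖F (s, θf j)‖ := isMinOn_iff.mp hp₀ _ h2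
  -- the winding sum
  set W : ℝ → ℝ :=
    fun s => ∑ j ∈ Finset.range (2*m), Complex.arg (F (s, θf (j+1)) / F (s, θf j)) with hWdef
  have hm1 : 1 ≤ 2*m := by
    have : 0 < m := by exact_mod_cast hm0
    omega
  have hWcont : ContinuousOn W (Set.Icc (0:ℝ) 1) := by
    rw [hWdef]
    apply continuousOn_finset_sum
    intro j hj
    rw [Finset.mem_range] at hj
    intro s hs
    apply ContinuousAt.continuousWithinAt
    have hratio : ContinuousAt (fun s : ℝ => F (s, θf (j+1)) / F (s, θf j)) s := by
      apply ContinuousAt.div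
      · exact (hFcont.comp (continuous_id.prodMk continuous_const)).continuousAt
      · exact (hFcont.comp (continuous_id.prodMk continuous_const)).continuousAt
      · exact hF0 _
    have harg : ContinuousAt Complex.arg (F (s, θf (j+1)) / F (s, θf j)) :=
      Complex.continuousAt_arg (Or.inl (ratio_re_pos (hclose s hs j hj)))
    exact ContinuousAt.comp (f := fun a : ℝ => F (a, θf (j+1)) / F (a, θf j))
      (g := Complex.arg) harg hratio
  have hWker : ∀ s ∈ Set.Icc (0:ℝ) 1, ∃ k : ℤ, W s = 2*π*k := by
    intro s _
    have hexp := exp_sum_arg (fun j => F (s, θf j)) (fun j => hF0 _) (2*m)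
    have hend : F (s, θf (2*m)) = F (s, θf 0) := by
      have e0 : θf 0 = 0 := by simp [hθdef]
      have e1 : θf (2*m) = (0:ℝ) + 2*π := by
        rw [hθdef]
        push_cast
        field_simp
        ring
      rw [e0, e1, hFper]
    rw [hend] at hexp
    rw [div_self (div_ne_zero (hF0 _) (by exact_mod_cast norm_ne_zero_iff.mpr (hF0 _)))] at hexp
    have hW1 : Complex.exp ((W s : ℝ) * Complex.I) = 1 := by rw [hWdef]; exact hexp
    rw [Complex.exp_eq_one_iff] at hW1
    obtain ⟨k, hk⟩ := hW1
    refine ⟨k, ?_⟩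
    have h2 : ((W s : ℝ) : ℂ) = ((2*π*k : ℝ) : ℂ) := by
      apply mul_right_cancel₀ Complex.I_ne_zero
      push_cast
      push_cast at hk
      linear_combination hk
    exact_mod_cast h2
  have hW1 : W 1 = 0 := by
    rw [hWdef]
    apply Finset.sum_eq_zero
    intro j hj
    have : F (1, θf (j+1)) = F (1, θf j) := by
      simp only [hFdef]
      rw [xp_one r (θf (j+1)) (θf j)]
    rw [this, div_self (hF0 _), Complex.arg_one]
  have hθadd : ∀ j : ℕ, θf (m + j) = θf j + π := by
    intro j
    rw [hθdef]
    push_cast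
    field_simp
    ring
  have haper : ∀ j : ℕ, Complex.arg (F (0, θf (m + j + 1)) / F (0, θf (m + j)))
      = Complex.arg (F (0, θf (j+1)) / F (0, θf j)) := by
    intro j
    have hidx : m + j + 1 = m + (j + 1) := by omega
    have e1 : F (0, θf (m + j + 1)) = - F (0, θf (j+1)) := by
      rw [hidx, hθadd]
      exact hFanti _
    have e2 : F (0, θf (m + j)) = - F (0, θf j) := by
      rw [hθadd]
      exact hFanti _
    rw [e1, e2, neg_div_neg_eq]
  set V : ℝ := ∑ j ∈ Finset.range m, Complex.arg (F (0, θf (j+1)) / F (0, θf j)) with hVdef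
  have hsplit : W 0 = 2 * V := by
    rw [hWdef, hVdef]
    simp only
    rw [two_mul m, Finset.sum_range_add]
    have : ∀ j ∈ Finset.range m, Complex.arg (F (0, θf (m + j + 1)) / F (0, θf (m + j)))
        = Complex.arg (F (0, θf (j+1)) / F (0, θf j)) := fun j _ => haper j
    rw [Finset.sum_congr rfl this]
    ring
  have hVexp : Complex.exp ((V : ℝ) * Complex.I) = -1 := by
    have hexp := exp_sum_arg (fun j => F (0, θf j)) (fun j => hF0 _) m
    have hmid : F (0, θf m) = - F (0, θf 0) := by
      have e1 : θf m = θf 0 + π := by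
        have := hθadd 0
        simpa using this
      rw [e1]
      exact hFanti _
    rw [hmid] at hexp
    rw [hVdef]
    rw [hexp]
    have hX : F (0, θf 0) ≠ 0 := hF0 _
    have hc : (‖F (0, θf 0)‖ : ℂ) ≠ 0 := by
      exact_mod_cast norm_ne_zero_iff.mpr hX
    rw [norm_neg]
    field_simp
  have hVval : ∃ k : ℤ, V = π + 2*π*k := by
    have h1 : Complex.exp (((V - π : ℝ)) * Complex.I) = 1 := by
      push_cast
      rw [sub_mul, Complex.exp_sub, hVexp, Complex.exp_pi_mul_I]
      norm_num
    rw [Complex.exp_eq_one_iff] at h1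
    obtain ⟨k, hk⟩ := h1
    refine ⟨k, ?_⟩
    have h2 : ((V - π : ℝ) : ℂ) = ((2*π*k : ℝ) : ℂ) := by
      apply mul_right_cancel₀ Complex.I_ne_zero
      push_cast
      push_cast at hk
      linear_combination hk
    have h3 : V - π = 2*π*k := by exact_mod_cast h2
    linarith
  obtain ⟨k, hk⟩ := hVval
  have hW0 : W 0 = 2*π*(2*(k:ℝ)+1) := by
    rw [hsplit, hk]
    ring
  -- intermediate value argument
  have hIcc : Set.uIcc (1:ℝ) 0 = Set.Icc 0 1 := by
    rw [Set.uIcc_comm, Set.uIcc_of_le zero_le_one]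
  have hsub := intermediate_value_uIcc (a := (1:ℝ)) (b := 0) (f := W)
    (by rw [hIcc]; exact hWcont)
  have hc : π*(2*(k:ℝ)+1) ∈ Set.uIcc (W 1) (W 0) := by
    rw [hW1, hW0, Set.mem_uIcc]
    rcases le_or_gt 0 (2*(k:ℝ)+1) with h|h
    · left
      constructor
      · exact mul_nonneg Real.pi_pos.le h
      · nlinarith [Real.pi_pos]
    · right
      constructor
      · nlinarith [Real.pi_pos]
      · nlinarith [Real.pi_pos]
  obtain ⟨s, hs, hWs⟩ := hsub hc
  rw [hIcc] at hs
  obtain ⟨k', hk'⟩ := hWker s hs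
  rw [hk'] at hWs
  have hcast : (2*(k':ℝ)) = 2*(k:ℝ)+1 := by
    have hπ := Real.pi_ne_zero
    have : π * (2*(k':ℝ)) = π * (2*(k:ℝ)+1) := by linarith [hWs]
    exact mul_left_cancel₀ hπ this
  have hZ : (2*k' : ℤ) = 2*k+1 := by exact_mod_cast hcast
  omega
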